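/- Let N and M be von Neumann subalgebras of a von Neumann algebra L ⊆ B(H) with N ⊆_γ M for some γ > 0. If the inclusion N ⊆ L has the relative Dixmier property, then M' ∩ L ⊆_{2γ} N' ∩ L, i.e. for every x in the unit ball of M' ∩ L there exists y ∈ N' ∩ L with ‖x − y‖ ≤ 2γ. -/

import Mathlib

set_option synthInstance.maxHeartbeats 400000
set_option maxHeartbeats 1000000

variable {H : Type*} [NormedAddCommGroup H] [InnerProductSpace ℂ H] [CompleteSpace H]

/-- `S ⊆_γ T`: every element of the closed unit ball of `S` is within distance `γ`
of some element of `T`. -/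
def nearIncl (γ : ℝ) (S T : Set (H →L[ℂ] H)) : Prop :=
  ∀ x ∈ S, ‖x‖ ≤ 1 → ∃ y ∈ T, ‖x - y‖ ≤ γ

/-- The set `{u x u* : u a unitary of N}`. -/
def unitaryConjOrbit (N : VonNeumannAlgebra H) (x : H →L[ℂ] H) : Set (H →L[ℂ] H) :=
  {y | ∃ u : H →L[ℂ] H, u ∈ N ∧ u ∈ unitary (H →L[ℂ] H) ∧ y = u * x * star u}

/-- The inclusion `N ⊆ L` has the relative Dixmier property if for every `x ∈ L` the
norm-closed convex hull of the unitary `N`-conjugates of `x` meets `N' ∩ L`. -/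
def HasRelDixmier (N L : VonNeumannAlgebra H) : Prop :=
  ∀ x ∈ (L : Set (H →L[ℂ] H)),
    (closure (convexHull ℝ (unitaryConjOrbit N x)) ∩
      (N.commutant : Set (H →L[ℂ] H)) ∩ (L : Set (H →L[ℂ] H))).Nonempty

/-- If `N, M` are von Neumann subalgebras of `L` with `N ⊆_γ M`, and `N ⊆ L` has the relative
Dixmier property, then `M' ∩ L ⊆_{2γ} N' ∩ L`. -/
theorem commutant_nearIncl_of_relDixmier (N M L : VonNeumannAlgebra H)
    (hNL : (N : Set (H →L[ℂ] H)) ⊆ (L : Set (H →L[ℂ] H)))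
    (hML : (M : Set (H →L[ℂ] H)) ⊆ (L : Set (H →L[ℂ] H)))
    (γ : ℝ) (hγ : 0 < γ) (hNM : nearIncl γ (N : Set (H →L[ℂ] H)) (M : Set (H →L[ℂ] H)))
    (hDix : HasRelDixmier N L) :
    nearIncl (2 * γ) ((M.commutant : Set (H →L[ℂ] H)) ∩ (L : Set (H →L[ℂ] H)))
      ((N.commutant : Set (H →L[ℂ] H)) ∩ (L : Set (H →L[ℂ] H))) := by
  intro x hx hx1
  obtain ⟨hxM, hxL⟩ := hx
  obtain ⟨y, ⟨hyC, hyN⟩, hyL⟩ := hDix x hxL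
  refine ⟨y, ⟨hyN, hyL⟩, ?_⟩
  -- Every unitary conjugate of x is within 2γ of x.
  have horb : unitaryConjOrbit N x ⊆ Metric.closedBall x (2 * γ) := by
    rintro _ ⟨u, huN, huU, rfl⟩
    -- unitaries have norm ≤ 1
    have hu1 : ‖u‖ ≤ 1 := by
      have h1 : star u * u = 1 := (Unitary.mem_iff.mp huU).1
      have h2 : ‖u‖ * ‖u‖ ≤ 1 := by
        rw [← CStarRing.norm_star_mul_self, h1]
        exact ContinuousLinearMap.norm_id_le
      nlinarith [norm_nonneg u]
    have hsu1 : ‖star u‖ ≤ 1 := by rwa [norm_star]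
    obtain ⟨m, hmM, hum⟩ := hNM u huN hu1
    have hcomm : x * m = m * x := (VonNeumannAlgebra.mem_commutant_iff.mp hxM m hmM).symm
    have key : u * x * star u - x = (u - m) * x * star u + x * (m - u) * star u := by
      have huu : u * star u = 1 := (Unitary.mem_iff.mp huU).2
      have e1 : x * (m - u) * star u = m * x * star u - x := by
        rw [mul_sub, hcomm, sub_mul, mul_assoc x u, huu, mul_one]
      rw [sub_mul, sub_mul, e1]
      abel
    rw [Metric.mem_closedBall, dist_eq_norm, key]
    have h1' : ‖(u - m) * x * star u‖ ≤ γ := by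
      calc ‖(u - m) * x * star u‖ ≤ ‖u - m‖ * ‖x‖ * ‖star u‖ :=
            (norm_mul_le _ _).trans (by gcongr; exact norm_mul_le _ _)
        _ ≤ γ * 1 * 1 := by gcongr
        _ = γ := by ring
    have h2' : ‖x * (m - u) * star u‖ ≤ γ := by
      have : ‖m - u‖ ≤ γ := by rwa [norm_sub_rev]
      calc ‖x * (m - u) * star u‖ ≤ ‖x‖ * ‖m - u‖ * ‖star u‖ :=
            (norm_mul_le _ _).trans (by gcongr; exact norm_mul_le _ _)
        _ ≤ 1 * γ * 1 := by gcongr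
        _ = γ := by ring
    calc ‖(u - m) * x * star u + x * (m - u) * star u‖
        ≤ ‖(u - m) * x * star u‖ + ‖x * (m - u) * star u‖ := norm_add_le _ _
      _ ≤ γ + γ := add_le_add h1' h2'
      _ = 2 * γ := by ring
  have hball : closure (convexHull ℝ (unitaryConjOrbit N x)) ⊆ Metric.closedBall x (2 * γ) :=
    closure_minimal (convexHull_min horb (convex_closedBall _ _)) Metric.isClosed_closedBall
  have := hball hyC
  rw [Metric.mem_closedBall, dist_eq_norm, norm_sub_rev] at this
  exact this
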